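/- For the diagonal operator A on ℓ² with Ae_n = −n²π² e_n and the control element b with b_n = (−1)^n √2 nπ, the resolvent condition sup_{Re λ > 0} (Re λ)^{1/4} ‖R(λ,A)b‖_{ℓ²} < ∞ holds. In particular, since b is not L⁴-admissible for A, the 4-Weiss property fails for A even though A is self-adjoint and negative definite. -/

import Mathlib

open Real

lemma arctan_diff_lb {a b : ℝ} (ha : 0 ≤ a) (hab : a ≤ b) :
    (b - a) / (1 + b ^ 2) ≤ arctan b - arctan a := by
  have h1 : (∫ x : ℝ in a..b, (1:ℝ) / (1 + x ^ 2)) = arctan b - arctan a :=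
    integral_one_div_one_add_sq
  have hb2 : (0:ℝ) < 1 + b ^ 2 := by positivity
  have h2 : (∫ x : ℝ in a..b, (1:ℝ) / (1 + b ^ 2)) ≤
      ∫ x : ℝ in a..b, (1:ℝ) / (1 + x ^ 2) := by
    apply intervalIntegral.integral_mono_on hab (by simp [intervalIntegrable_const])
      intervalIntegral.intervalIntegrable_one_div_one_add_sq
    intro x hx
    have hx2 : x ^ 2 ≤ b ^ 2 := by
      have h0 : 0 ≤ x := le_trans ha hx.1
      nlinarith [hx.2, hx.1]
    exact one_div_le_one_div_of_le (by positivity) (by linarith)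
  rw [intervalIntegral.integral_const, smul_eq_mul] at h2
  rw [← h1]
  calc (b - a) / (1 + b ^ 2) = (b - a) * ((1:ℝ) / (1 + b ^ 2)) := by ring
  _ ≤ _ := h2

theorem resolvent_condition_dirichlet_heat :
    ∃ M : ℝ, ∀ lam : ℂ, 0 < lam.re →
      (lam.re) ^ ((1:ℝ)/4) *
        (∑' n : ℕ, ‖((-1:ℂ) ^ ((n:ℕ)+1) * (Real.sqrt 2 * ((n:ℝ)+1) * π : ℝ)) /
            (lam + ((((n:ℝ)+1) ^ 2 * π ^ 2 : ℝ) : ℂ))‖ ^ 2) ^ ((1:ℝ)/2)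
        ≤ M := by
  refine ⟨1, fun lam hr => ?_⟩
  set r : ℝ := lam.re with hrdef
  set s : ℝ := Real.sqrt r with hsdef
  have hs : 0 < s := Real.sqrt_pos.mpr hr
  have hs2 : s ^ 2 = r := Real.sq_sqrt hr.le
  set f : ℕ → ℝ := fun n =>
    ‖((-1:ℂ) ^ ((n:ℕ)+1) * (Real.sqrt 2 * ((n:ℝ)+1) * π : ℝ)) /
        (lam + ((((n:ℝ)+1) ^ 2 * π ^ 2 : ℝ) : ℂ))‖ ^ 2 with hf
  have hfnonneg : ∀ n, 0 ≤ f n := fun n => by positivity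
  -- pointwise bound : f n ≤ 2/(r + (n+1)²π²)
  have hbound : ∀ n : ℕ, f n ≤ 2 / (r + ((n:ℝ)+1) ^ 2 * π ^ 2) := by
    intro n
    set a : ℝ := ((n:ℝ)+1) ^ 2 * π ^ 2 with hadef
    have ha : 0 < a := by positivity
    have hra : 0 < r + a := by linarith
    -- compute the numerator norm
    have hnum : ‖((-1:ℂ) ^ ((n:ℕ)+1) * (Real.sqrt 2 * ((n:ℝ)+1) * π : ℝ))‖
        = Real.sqrt 2 * ((n:ℝ)+1) * π := by
      rw [norm_mul, norm_pow, norm_neg, norm_one, one_pow, one_mul,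
        Complex.norm_real]
      have : (0:ℝ) ≤ Real.sqrt 2 * ((n:ℝ)+1) * π := by positivity
      rw [Real.norm_eq_abs, abs_of_nonneg this]
    -- denominator lower bound
    have hden : r + a ≤ ‖lam + ((a : ℝ) : ℂ)‖ := by
      have h1 : (lam + ((a : ℝ) : ℂ)).re = r + a := by simp [hrdef]
      calc r + a = (lam + ((a : ℝ) : ℂ)).re := h1.symm
      _ ≤ |(lam + ((a : ℝ) : ℂ)).re| := le_abs_self _
      _ ≤ ‖lam + ((a : ℝ) : ℂ)‖ := Complex.abs_re_le_norm _
    have hden0 : (0:ℝ) < ‖lam + ((a : ℝ) : ℂ)‖ := lt_of_lt_of_le hra hden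
    have hfe : f n = (Real.sqrt 2 * ((n:ℝ)+1) * π) ^ 2 / ‖lam + ((a : ℝ) : ℂ)‖ ^ 2 := by
      rw [hf]
      simp only [norm_div, hnum, div_pow]
      rfl
    rw [hfe]
    have hnum2 : (Real.sqrt 2 * ((n:ℝ)+1) * π) ^ 2 = 2 * a := by
      rw [mul_pow, mul_pow, Real.sq_sqrt (by norm_num : (0:ℝ) ≤ 2), hadef]; ring
    rw [hnum2]
    calc 2 * a / ‖lam + ((a : ℝ) : ℂ)‖ ^ 2
        ≤ 2 * a / (r + a) ^ 2 := by
          apply div_le_div_of_nonneg_left (by positivity) (by positivity)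
          exact pow_le_pow_left₀ hra.le hden 2
      _ ≤ 2 / (r + a) := by
          rw [div_le_div_iff₀ (by positivity) hra]
          nlinarith
  -- tsum bound via telescoping arctan
  have htsum : (∑' n, f n) ≤ 1 / s := by
    apply Real.tsum_le_of_sum_range_le hfnonneg
    intro N
    have hstep : ∀ n ∈ Finset.range N, f n ≤
        (2 / (π * s)) * (arctan (((n:ℝ)+1) * π / s) - arctan ((n:ℝ) * π / s)) := by
      intro n _
      refine (hbound n).trans ?_
      have ha : (0:ℝ) ≤ (n:ℝ) * π / s := by positivity
      have hab : (n:ℝ) * π / s ≤ ((n:ℝ)+1) * π / s := by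
        gcongr
        nlinarith [pi_pos]
      have := arctan_diff_lb ha hab
      have hkey : (((n:ℝ)+1) * π / s - (n:ℝ) * π / s) / (1 + (((n:ℝ)+1) * π / s) ^ 2)
          = π * s / (r + ((n:ℝ)+1) ^ 2 * π ^ 2) := by
        rw [div_eq_div_iff (by positivity) (by positivity)]
        field_simp
        linear_combination -hs2
      rw [hkey] at this
      calc 2 / (r + ((n:ℝ)+1) ^ 2 * π ^ 2)
          = (2 / (π * s)) * (π * s / (r + ((n:ℝ)+1) ^ 2 * π ^ 2)) := by
            field_simp
        _ ≤ _ := mul_le_mul_of_nonneg_left this (by positivity)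
    calc ∑ n ∈ Finset.range N, f n
        ≤ ∑ n ∈ Finset.range N,
          (2 / (π * s)) * (arctan (((n:ℝ)+1) * π / s) - arctan ((n:ℝ) * π / s)) :=
          Finset.sum_le_sum hstep
      _ = (2 / (π * s)) * (arctan ((N:ℝ) * π / s) - arctan ((0:ℝ) * π / s)) := by
          rw [← Finset.mul_sum]
          congr 1
          have := Finset.sum_range_sub (fun n : ℕ => arctan ((n:ℝ) * π / s)) N
          simpa using this
      _ ≤ (2 / (π * s)) * (π / 2) := by
          apply mul_le_mul_of_nonneg_left _ (by positivity)
          have h1 : arctan ((N:ℝ) * π / s) < π / 2 := arctan_lt_pi_div_two _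
          have h2 : arctan ((0:ℝ) * π / s) = 0 := by norm_num
          linarith
      _ = 1 / s := by field_simp
  -- finish with rpow arithmetic
  have htnn : (0:ℝ) ≤ ∑' n, f n := tsum_nonneg hfnonneg
  have h1 : (∑' n, f n) ^ ((1:ℝ)/2) ≤ (1 / s) ^ ((1:ℝ)/2) :=
    Real.rpow_le_rpow htnn htsum (by norm_num)
  have h2 : (1 / s : ℝ) ^ ((1:ℝ)/2) = r ^ (-(1:ℝ)/4) := by
    rw [hsdef, Real.sqrt_eq_rpow, one_div, ← Real.rpow_neg hr.le,
      ← Real.rpow_mul hr.le]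
    norm_num
  calc r ^ ((1:ℝ)/4) * (∑' n, f n) ^ ((1:ℝ)/2)
      ≤ r ^ ((1:ℝ)/4) * r ^ (-(1:ℝ)/4) := by
        rw [← h2]; exact mul_le_mul_of_nonneg_left (h2 ▸ h1) (by positivity)
    _ = 1 := by
        rw [← Real.rpow_add hr]; norm_num
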